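/- Let μ be a partition with ℓ(μ) ≤ N and μ_1 ≤ M, and μ' its conjugate. Then V_M(μ') = (∏_{j=1}^{N+M−1} j!) · V_N(μ) · W_N(μ) · ∏_{j=1}^N 1/(M + j − 1 − μ_j)!, where V_m(λ) = ∏_{1≤i<j≤m}(λ_i − λ_j + j − i) and W_m(λ) = ∏_{i=1}^m 1/(λ_i + m − i)!. -/

import Mathlib

open Finset


def Pv (A : Finset ℕ) : ℚ := ∏ x ∈ A, ∏ y ∈ A.filter (· < x), ((x : ℚ) - y)

lemma swap_lt (s t : Finset ℕ) (f : ℕ → ℕ → ℚ) :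
    (∏ x ∈ s, ∏ y ∈ t.filter (x < ·), f x y) =
      ∏ y ∈ t, ∏ x ∈ s.filter (· < y), f x y := by
  refine Finset.prod_comm' ?_
  intro x y
  simp only [mem_filter]
  tauto

lemma Pv_swap (A : Finset ℕ) :
    (∏ x ∈ A, ∏ y ∈ A.filter (x < ·), ((y : ℚ) - x)) = Pv A := by
  rw [swap_lt]; rfl

lemma Pv_pos (A : Finset ℕ) : 0 < Pv A := by
  refine Finset.prod_pos fun x hx => Finset.prod_pos fun y hy => ?_
  rw [mem_filter] at hy
  have : (y : ℚ) < x := by exact_mod_cast hy.2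
  linarith

lemma prod_enum (m : ℕ) (f : ℕ → ℕ)
    (hf : ∀ i j, 1 ≤ i → i < j → j ≤ m → f j < f i) :
    (∏ j ∈ Icc 1 m, ∏ i ∈ Icc 1 (j - 1), ((f i : ℚ) - f j)) =
      Pv ((Icc 1 m).image f) := by
  have hinj : Set.InjOn f (Icc 1 m) := by
    intro i hi j hj hij
    simp only [coe_Icc, Set.mem_Icc] at hi hj
    rcases lt_trichotomy i j with h | h | h
    · have := hf i j hi.1 h hj.2; omega
    · exact h
    · have := hf j i hj.1 h hi.2; omega
  rw [Pv, Finset.prod_image hinj]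
  have hset : ∀ x ∈ Icc 1 m,
      ((Icc 1 m).image f).filter (· < f x) = ((Icc 1 m).filter (x < ·)).image f := by
    intro x hx
    simp only [mem_Icc] at hx
    ext y
    simp only [mem_filter, mem_image]
    constructor
    · rintro ⟨⟨j, hj, rfl⟩, hlt⟩
      simp only [mem_Icc] at hj
      refine ⟨j, ?_, rfl⟩
      simp only [mem_filter, mem_Icc]
      refine ⟨⟨hj.1, hj.2⟩, ?_⟩
      by_contra h
      push_neg at h
      rcases Nat.lt_or_ge j x with h2 | h2
      · exact absurd hlt (not_lt.mpr (le_of_lt (hf j x hj.1 h2 hx.2)))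
      · have : j = x := le_antisymm h h2
        subst this; exact lt_irrefl _ hlt
    · rintro ⟨j, hj, rfl⟩
      simp only [mem_filter, mem_Icc] at hj
      exact ⟨⟨j, by simp [mem_Icc, hj.1.1, hj.1.2], rfl⟩,
        hf x j hx.1 hj.2 hj.1.2⟩
  calc (∏ j ∈ Icc 1 m, ∏ i ∈ Icc 1 (j - 1), ((f i : ℚ) - f j))
      = ∏ i ∈ Icc 1 m, ∏ j ∈ (Icc 1 m).filter (i < ·), ((f i : ℚ) - f j) := by
        refine (Finset.prod_comm' ?_).symm
        intro j i
        simp only [mem_filter, mem_Icc]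
        omega
    _ = ∏ x ∈ Icc 1 m, ∏ y ∈ ((Icc 1 m).image f).filter (· < f x), ((f x : ℚ) - y) := by
        refine Finset.prod_congr rfl fun x hx => ?_
        rw [hset x hx, Finset.prod_image]
        intro i hi j hj
        simp only [mem_coe, mem_filter, mem_Icc] at hi hj
        exact fun h => hinj (by simp [mem_Icc, hi.1.1, hi.1.2]) (by simp [mem_Icc, hj.1.1, hj.1.2]) h

lemma Pv_reflect (K : ℕ) (T : Finset ℕ) (hT : ∀ x ∈ T, x ≤ K) :
    Pv (T.image (K - ·)) = Pv T := by
  have hinj : Set.InjOn (K - ·) T := by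
    intro x hx y hy h
    simp only [mem_coe] at hx hy
    have := hT x hx; have := hT y hy
    have h' : K - x = K - y := h
    omega
  rw [Pv, Finset.prod_image hinj]
  have hset : ∀ x ∈ T, (T.image (K - ·)).filter (· < K - x) = (T.filter (x < ·)).image (K - ·) := by
    intro x hx
    ext y
    simp only [mem_filter, mem_image]
    constructor
    · rintro ⟨⟨j, hj, rfl⟩, hlt⟩
      have h1 := hT j hj; have h2 := hT x hx
      have hlt' : K - j < K - x := hlt
      exact ⟨j, ⟨hj, by omega⟩, rfl⟩
    · rintro ⟨j, ⟨hj1, hj2⟩, rfl⟩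
      have h1 := hT j hj1; have h2 := hT x hx
      refine ⟨⟨j, hj1, rfl⟩, ?_⟩
      show K - j < K - x
      omega
  calc (∏ x ∈ T, ∏ y ∈ (T.image (K - ·)).filter (· < K - x), (((K - x : ℕ) : ℚ) - y))
      = ∏ x ∈ T, ∏ j ∈ T.filter (x < ·), ((j : ℚ) - x) := by
        refine Finset.prod_congr rfl fun x hx => ?_
        rw [hset x hx, Finset.prod_image (fun i hi j hj h => hinj (mem_coe.mpr (mem_filter.mp hi).1) (mem_coe.mpr (mem_filter.mp hj).1) h)]
        refine Finset.prod_congr rfl fun j hj => ?_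
        simp only [mem_filter] at hj
        have h1 := hT j hj.1; have h2 := hT x hx
        show ((K - x : ℕ) : ℚ) - ((K - j : ℕ) : ℚ) = _
        rw [Nat.cast_sub h2, Nat.cast_sub h1]
        ring
    _ = Pv T := Pv_swap T


def Cv (A B : Finset ℕ) : ℚ :=
  (∏ x ∈ A, ∏ y ∈ B.filter (· < x), ((x : ℚ) - y)) *
  (∏ y ∈ B, ∏ x ∈ A.filter (· < y), ((y : ℚ) - x))

lemma Pv_split (A B : Finset ℕ) (hAB : Disjoint A B) :
    Pv (A ∪ B) = Pv A * Pv B * Cv A B := by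
  have hfilt : ∀ x : ℕ, (A ∪ B).filter (· < x) = A.filter (· < x) ∪ B.filter (· < x) :=
    fun x => Finset.filter_union _ _ _
  have hdisj : ∀ x : ℕ, Disjoint (A.filter (· < x)) (B.filter (· < x)) :=
    fun x => hAB.mono (filter_subset _ _) (filter_subset _ _)
  unfold Pv Cv
  rw [Finset.prod_union hAB]
  have h1 : ∀ C : Finset ℕ, (∏ x ∈ C, ∏ y ∈ (A ∪ B).filter (· < x), ((x : ℚ) - y)) =
      (∏ x ∈ C, ∏ y ∈ A.filter (· < x), ((x : ℚ) - y)) *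
      (∏ x ∈ C, ∏ y ∈ B.filter (· < x), ((x : ℚ) - y)) := by
    intro C
    rw [← Finset.prod_mul_distrib]
    refine Finset.prod_congr rfl fun x _ => ?_
    rw [hfilt x, Finset.prod_union (hdisj x)]
  rw [h1 A, h1 B]
  ring

lemma factorial_lower (K s : ℕ) (hs : s ≤ K) :
    (∏ y ∈ (range (K + 1)).filter (· < s), ((s : ℚ) - y)) = (Nat.factorial s : ℚ) := by
  have hset : (range (K + 1)).filter (· < s) = range s := by
    ext y; simp only [mem_filter, mem_range]; omega
  rw [hset]
  have : (∏ y ∈ range s, ((s : ℚ) - y)) = ((∏ y ∈ range s, (s - y) : ℕ) : ℚ) := by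
    rw [Nat.cast_prod]
    refine Finset.prod_congr rfl fun y hy => ?_
    rw [mem_range] at hy
    rw [Nat.cast_sub (le_of_lt hy)]
  rw [this]
  congr 1
  calc (∏ y ∈ range s, (s - y)) = ∏ y ∈ range s, (s - 1 - y + 1) := by
        refine Finset.prod_congr rfl fun y hy => ?_
        rw [mem_range] at hy; omega
    _ = ∏ y ∈ range s, (y + 1) := Finset.prod_range_reflect (· + 1) s
    _ = Nat.factorial s := Finset.prod_range_add_one_eq_factorial s

lemma factorial_upper (K s : ℕ) (hs : s ≤ K) :
    (∏ x ∈ (range (K + 1)).filter (s < ·), ((x : ℚ) - s)) = (Nat.factorial (K - s) : ℚ) := by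
  have hset : (range (K + 1)).filter (s < ·) = (range (K - s)).image (fun t => s + 1 + t) := by
    ext x
    simp only [mem_filter, mem_range, mem_image]
    constructor
    · rintro ⟨h1, h2⟩; exact ⟨x - s - 1, by omega, by omega⟩
    · rintro ⟨t, ht, rfl⟩; omega
  rw [hset, Finset.prod_image (by intro a _ b _ h; have h' : s + 1 + a = s + 1 + b := h; omega)]
  calc (∏ t ∈ range (K - s), (((s + 1 + t : ℕ) : ℚ) - s))
      = ∏ t ∈ range (K - s), ((t : ℚ) + 1) := by
        refine Finset.prod_congr rfl fun t _ => ?_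
        push_cast; ring
    _ = ((∏ t ∈ range (K - s), (t + 1) : ℕ) : ℚ) := by push_cast; rfl
    _ = (Nat.factorial (K - s) : ℚ) := by rw [Finset.prod_range_add_one_eq_factorial]

lemma Pv_range (K : ℕ) :
    Pv (range (K + 1)) = ∏ j ∈ Icc 1 K, (Nat.factorial j : ℚ) := by
  unfold Pv
  have h1 : (∏ x ∈ range (K + 1), ∏ y ∈ (range (K + 1)).filter (· < x), ((x : ℚ) - y)) =
      ∏ x ∈ range (K + 1), (Nat.factorial x : ℚ) := by
    refine Finset.prod_congr rfl fun x hx => ?_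
    rw [mem_range] at hx
    exact factorial_lower K x (by omega)
  rw [h1]
  have h2 : range (K + 1) = insert 0 (Icc 1 K) := by
    ext y; simp only [mem_insert, mem_range, mem_Icc]; omega
  rw [h2, Finset.prod_insert (by simp)]
  simp [Nat.factorial]

lemma prod_fact_eq (K : ℕ) (S : Finset ℕ) (hS : S ⊆ range (K + 1)) :
    (∏ s ∈ S, ((Nat.factorial s : ℚ) * (Nat.factorial (K - s) : ℚ))) =
      Pv S * Pv S * Cv S (range (K + 1) \ S) := by
  set T := range (K + 1) \ S with hT
  have hd : Disjoint S T := disjoint_sdiff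
  have hu : S ∪ T = range (K + 1) := union_sdiff_of_subset hS
  have key : ∀ s ∈ S, (Nat.factorial s : ℚ) * (Nat.factorial (K - s) : ℚ) =
      ((∏ y ∈ S.filter (· < s), ((s : ℚ) - y)) * (∏ y ∈ T.filter (· < s), ((s : ℚ) - y))) *
      ((∏ x ∈ S.filter (s < ·), ((x : ℚ) - s)) * (∏ x ∈ T.filter (s < ·), ((x : ℚ) - s))) := by
    intro s hs
    have hsK : s ≤ K := by have := hS hs; rw [mem_range] at this; omega
    rw [← factorial_lower K s hsK, ← factorial_upper K s hsK, ← hu, filter_union, filter_union,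
      prod_union (hd.mono (filter_subset _ _) (filter_subset _ _)),
      prod_union (hd.mono (filter_subset _ _) (filter_subset _ _))]
  rw [Finset.prod_congr rfl key]
  simp only [Finset.prod_mul_distrib]
  have e1 : (∏ s ∈ S, ∏ x ∈ S.filter (s < ·), ((x : ℚ) - s)) = Pv S := by
    rw [swap_lt]; rfl
  have e2 : (∏ s ∈ S, ∏ x ∈ T.filter (s < ·), ((x : ℚ) - s)) =
      ∏ y ∈ T, ∏ x ∈ S.filter (· < y), ((y : ℚ) - x) := swap_lt S T (fun s x => (x : ℚ) - s)
  rw [e1, e2]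
  unfold Pv Cv
  ring

/-- Lemma 5.2: for a partition `μ` in an `N × M` box with conjugate `μ'`,
`V_M(μ') = (∏_{j=1}^{N+M−1} j!) · V_N(μ) · W_N(μ) · ∏_{j=1}^N 1/(M + j − 1 − μ_j)!`. -/
theorem conjugate_vandermonde_identity
    (N M : ℕ) (l : ℕ → ℕ) (hmono : ∀ i j, i ≤ j → l j ≤ l i)
    (hlen : ∀ i, N < i → l i = 0) (hwidth : l 1 ≤ M)
    (c : ℕ → ℕ) (hc : ∀ j, c j = ((Finset.Icc 1 N).filter (fun i => j ≤ l i)).card) :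
    (∏ j ∈ Finset.Icc 1 M, ∏ i ∈ Finset.Icc 1 (j - 1),
        ((c i : ℚ) - (c j : ℚ) + (j : ℚ) - (i : ℚ))) =
      (∏ j ∈ Finset.Icc 1 (N + M - 1), (Nat.factorial j : ℚ)) *
      (∏ j ∈ Finset.Icc 1 N, ∏ i ∈ Finset.Icc 1 (j - 1),
        ((l i : ℚ) - (l j : ℚ) + (j : ℚ) - (i : ℚ))) *
      (∏ i ∈ Finset.Icc 1 N, (1 : ℚ) / (Nat.factorial (l i + (N - i)) : ℚ)) *
      (∏ j ∈ Finset.Icc 1 N, (1 : ℚ) / (Nat.factorial (M + j - 1 - l j) : ℚ)) := by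
  rcases Nat.eq_zero_or_pos (N + M) with hNM | hNM
  · have hN : N = 0 := by omega
    have hM : M = 0 := by omega
    subst hN; subst hM
    simp
  set K := N + M - 1 with hK
  have hK1 : K + 1 = N + M := by omega
  have hlM : ∀ i, 1 ≤ i → l i ≤ M := fun i hi => le_trans (hmono 1 i hi) hwidth
  have hcN : ∀ j, c j ≤ N := by
    intro j; rw [hc j]
    calc ((Icc 1 N).filter (fun i => j ≤ l i)).card ≤ (Icc 1 N).card := card_filter_le _ _
      _ = N := by rw [Nat.card_Icc]; omega
  have hcmono : ∀ i j, i ≤ j → c j ≤ c i := by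
    intro i j hij
    rw [hc i, hc j]
    apply Finset.card_le_card
    intro x hx
    rw [mem_filter] at hx ⊢
    exact ⟨hx.1, le_trans hij hx.2⟩
  have hciff : ∀ i j, 1 ≤ i → i ≤ N → (i ≤ c j ↔ j ≤ l i) := by
    intro i j hi hiN
    constructor
    · intro h
      rw [hc j] at h
      by_contra hc'
      push_neg at hc'
      have hsub : (Icc 1 N).filter (fun i' => j ≤ l i') ⊆ Icc 1 (i - 1) := by
        intro x hx
        rw [mem_filter, mem_Icc] at hx
        rw [mem_Icc]
        refine ⟨hx.1.1, ?_⟩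
        by_contra hxi
        push_neg at hxi
        have : l x ≤ l i := hmono i x (by omega)
        omega
      have := Finset.card_le_card hsub
      rw [Nat.card_Icc] at this
      omega
    · intro h
      rw [hc j]
      have hsub : Icc 1 i ⊆ (Icc 1 N).filter (fun i' => j ≤ l i') := by
        intro x hx
        rw [mem_Icc] at hx
        rw [mem_filter, mem_Icc]
        exact ⟨⟨hx.1, le_trans hx.2 hiN⟩, le_trans h (hmono x i hx.2)⟩
      have := Finset.card_le_card hsub
      rw [Nat.card_Icc] at this
      omega
  set S : Finset ℕ := (Icc 1 N).image (fun i => l i + (N - i)) with hS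
  have haK : ∀ i, 1 ≤ i → i ≤ N → l i + (N - i) ≤ K := by
    intro i h1 h2
    have := hlM i h1
    omega
  have hSsub : S ⊆ range (K + 1) := by
    intro x hx
    rw [hS, mem_image] at hx
    obtain ⟨i, hi, rfl⟩ := hx
    rw [mem_Icc] at hi
    rw [mem_range]
    have := haK i hi.1 hi.2; omega
  have ha_anti : ∀ i j, 1 ≤ i → i < j → j ≤ N → l j + (N - j) < l i + (N - i) := by
    intro i j h1 h2 h3
    have := hmono i j (le_of_lt h2)
    omega
  have hd_mono : ∀ i j, 1 ≤ i → i < j → j ≤ M → N + i - 1 - c i < N + j - 1 - c j := by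
    intro i j h1 h2 h3
    have := hcmono i j (le_of_lt h2)
    have := hcN i
    omega
  set T : Finset ℕ := range (K + 1) \ S with hT
  have hcS : S.card = N := by
    rw [hS, Finset.card_image_of_injOn, Nat.card_Icc]
    · omega
    · intro i hi j hj h
      simp only [coe_Icc, Set.mem_Icc] at hi hj
      have h2 : l i + (N - i) = l j + (N - j) := h
      rcases lt_trichotomy i j with h' | h' | h'
      · have := ha_anti i j hi.1 h' hj.2; omega
      · exact h'
      · have := ha_anti j i hj.1 h' hi.2; omega
  have hTd : T = (Icc 1 M).image (fun j => N + j - 1 - c j) := by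
    symm
    apply Finset.eq_of_subset_of_card_le
    · intro x hx
      rw [mem_image] at hx
      obtain ⟨j, hj, rfl⟩ := hx
      rw [mem_Icc] at hj
      rw [hT, mem_sdiff, mem_range]
      constructor
      · have := hcN j; omega
      · intro hmem
        rw [hS, mem_image] at hmem
        obtain ⟨i, hi, heq⟩ := hmem
        rw [mem_Icc] at hi
        have hiff := hciff i j hi.1 hi.2
        have hcj := hcN j
        rcases le_or_gt j (l i) with h | h
        · have : i ≤ c j := hiff.mpr h
          omega
        · have : ¬ i ≤ c j := fun hh => absurd (hiff.mp hh) (by omega)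
          omega
    · have hcT : T.card = M := by
        rw [hT, Finset.card_sdiff_of_subset hSsub, Finset.card_range, hcS]; omega
      have hcI : ((Icc 1 M).image (fun j => N + j - 1 - c j)).card = M := by
        rw [Finset.card_image_of_injOn, Nat.card_Icc]
        · omega
        · intro i hi j hj h
          simp only [coe_Icc, Set.mem_Icc] at hi hj
          have h2 : N + i - 1 - c i = N + j - 1 - c j := h
          rcases lt_trichotomy i j with h' | h' | h'
          · have := hd_mono i j hi.1 h' hj.2; omega
          · exact h'
          · have := hd_mono j i hj.1 h' hi.2; omega
      omega
  have hBT : (Icc 1 M).image (fun j => c j + (M - j)) = T.image (K - ·) := by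
    rw [hTd, Finset.image_image]
    apply Finset.image_congr
    intro j hj
    simp only [coe_Icc, Set.mem_Icc] at hj
    have := hcN j
    show c j + (M - j) = K - (N + j - 1 - c j)
    omega
  -- LHS equals Pv T
  have hLHS : (∏ j ∈ Icc 1 M, ∏ i ∈ Icc 1 (j - 1),
      ((c i : ℚ) - (c j : ℚ) + (j : ℚ) - (i : ℚ))) = Pv T := by
    have h1 : (∏ j ∈ Icc 1 M, ∏ i ∈ Icc 1 (j - 1),
        ((c i : ℚ) - (c j : ℚ) + (j : ℚ) - (i : ℚ))) =
        ∏ j ∈ Icc 1 M, ∏ i ∈ Icc 1 (j - 1),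
          (((c i + (M - i) : ℕ) : ℚ) - ((c j + (M - j) : ℕ) : ℚ)) := by
      refine Finset.prod_congr rfl fun j hj => Finset.prod_congr rfl fun i hi => ?_
      rw [mem_Icc] at hj hi
      have hiM : i ≤ M := by omega
      have hjM : j ≤ M := hj.2
      push_cast [Nat.cast_sub hiM, Nat.cast_sub hjM]
      ring
    rw [h1, prod_enum M (fun j => c j + (M - j)) (by
      intro i j h1' h2' h3'
      have := hcmono i j (le_of_lt h2')
      show c j + (M - j) < c i + (M - i)
      omega), hBT, Pv_reflect]
    intro x hx
    rw [hT, mem_sdiff, mem_range] at hx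
    omega
  -- V_N equals Pv S
  have hRS : (∏ j ∈ Icc 1 N, ∏ i ∈ Icc 1 (j - 1),
      ((l i : ℚ) - (l j : ℚ) + (j : ℚ) - (i : ℚ))) = Pv S := by
    have h1 : (∏ j ∈ Icc 1 N, ∏ i ∈ Icc 1 (j - 1),
        ((l i : ℚ) - (l j : ℚ) + (j : ℚ) - (i : ℚ))) =
        ∏ j ∈ Icc 1 N, ∏ i ∈ Icc 1 (j - 1),
          (((l i + (N - i) : ℕ) : ℚ) - ((l j + (N - j) : ℕ) : ℚ)) := by
      refine Finset.prod_congr rfl fun j hj => Finset.prod_congr rfl fun i hi => ?_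
      rw [mem_Icc] at hj hi
      have hiN : i ≤ N := by omega
      have hjN : j ≤ N := hj.2
      push_cast [Nat.cast_sub hiN, Nat.cast_sub hjN]
      ring
    rw [h1, prod_enum N (fun i => l i + (N - i)) ha_anti, hS]
  -- factorial products
  have hainjOn : Set.InjOn (fun i => l i + (N - i)) (Icc 1 N) := by
    intro i hi j hj h
    simp only [coe_Icc, Set.mem_Icc] at hi hj
    have h2 : l i + (N - i) = l j + (N - j) := h
    rcases lt_trichotomy i j with h' | h' | h'
    · have := ha_anti i j hi.1 h' hj.2; omega
    · exact h'
    · have := ha_anti j i hj.1 h' hi.2; omega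
  have hW : (∏ i ∈ Icc 1 N, (1 : ℚ) / (Nat.factorial (l i + (N - i)) : ℚ)) *
      (∏ j ∈ Icc 1 N, (1 : ℚ) / (Nat.factorial (M + j - 1 - l j) : ℚ)) =
      (∏ s ∈ S, ((Nat.factorial s : ℚ) * (Nat.factorial (K - s) : ℚ)))⁻¹ := by
    have h2 : (∏ j ∈ Icc 1 N, (1 : ℚ) / (Nat.factorial (M + j - 1 - l j) : ℚ)) =
        ∏ j ∈ Icc 1 N, (1 : ℚ) / (Nat.factorial (K - (l j + (N - j))) : ℚ) := by
      refine Finset.prod_congr rfl fun j hj => ?_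
      rw [mem_Icc] at hj
      have := hlM j hj.1
      have heq : M + j - 1 - l j = K - (l j + (N - j)) := by omega
      rw [heq]
    rw [h2, ← Finset.prod_mul_distrib, hS, Finset.prod_image hainjOn]
    rw [← Finset.prod_inv_distrib]
    refine Finset.prod_congr rfl fun i hi => ?_
    rw [div_mul_div_comm, one_mul, one_div]
  -- superfactorial splitting
  have hPR : (∏ j ∈ Icc 1 K, (Nat.factorial j : ℚ)) = Pv S * Pv T * Cv S T := by
    rw [← Pv_range K]
    have : range (K + 1) = S ∪ T := by
      rw [hT, Finset.union_sdiff_of_subset hSsub]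
    rw [this]
    exact Pv_split S T (hT ▸ disjoint_sdiff)
  have hFeq : (∏ s ∈ S, ((Nat.factorial s : ℚ) * (Nat.factorial (K - s) : ℚ))) =
      Pv S * Pv S * Cv S T := by
    rw [prod_fact_eq K S hSsub, ← hT]
  have hFpos : (0 : ℚ) < ∏ s ∈ S, ((Nat.factorial s : ℚ) * (Nat.factorial (K - s) : ℚ)) :=
    Finset.prod_pos fun s _ => mul_pos (by positivity) (by positivity)
  have hPvS : Pv S ≠ 0 := ne_of_gt (Pv_pos S)
  have hCne : Cv S T ≠ 0 := by
    intro h0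
    rw [hFeq, h0, mul_zero] at hFpos
    exact lt_irrefl 0 hFpos
  calc (∏ j ∈ Icc 1 M, ∏ i ∈ Icc 1 (j - 1),
      ((c i : ℚ) - (c j : ℚ) + (j : ℚ) - (i : ℚ))) = Pv T := hLHS
    _ = (∏ j ∈ Icc 1 K, (Nat.factorial j : ℚ)) * Pv S *
        (∏ s ∈ S, ((Nat.factorial s : ℚ) * (Nat.factorial (K - s) : ℚ)))⁻¹ := by
        rw [hPR, hFeq]
        field_simp
    _ = (∏ j ∈ Icc 1 K, (Nat.factorial j : ℚ)) *
        (∏ j ∈ Icc 1 N, ∏ i ∈ Icc 1 (j - 1),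
          ((l i : ℚ) - (l j : ℚ) + (j : ℚ) - (i : ℚ))) *
        ((∏ i ∈ Icc 1 N, (1 : ℚ) / (Nat.factorial (l i + (N - i)) : ℚ)) *
         (∏ j ∈ Icc 1 N, (1 : ℚ) / (Nat.factorial (M + j - 1 - l j) : ℚ))) := by
        rw [hRS, hW]
    _ = _ := by ring
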